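/- Let D be a normalized deterministic co-Büchi automaton recognizing L (L(D) = L). Then for all pairs of finite words (u,v): (u,v) ≈_L ⊥ if and only if (u,v) ≈_D ⊥. -/

import Mathlib

open Classical

/-- Rank of a transition in a co-Büchi automaton: `one` or `two`. -/
inductive Rk | one | two
deriving DecidableEq

/-- A co-Büchi automaton over alphabet `A` with state type `Q`:
initial states and a transition relation where each transition carries a rank. -/
structure CoBuchi (A : Type) (Q : Type) where
  init : Set Q
  delta : Set (Q × A × Rk × Q)

namespace CoBuchi

variable {A Q : Type}

/-- Every state has an outgoing transition on every letter. -/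
def Total (M : CoBuchi A Q) : Prop :=
  ∀ q a, ∃ r q', (q, a, r, q') ∈ M.delta

/-- The prefix `α[0..n-1]` of an infinite word. -/
def prefW (α : ℕ → A) (n : ℕ) : List A := (List.range n).map α

/-- The infinite word `a·w`. -/
def consW (a : A) (w : ℕ → A) : ℕ → A := fun n => match n with
  | 0 => a
  | Nat.succ k => w k

/-- `L(M,q)`: infinite words having a run from `q` with only finitely many rank-1
transitions. -/
def LangFrom (M : CoBuchi A Q) (q : Q) : Set (ℕ → A) :=
  { w | ∃ (ρ : ℕ → Q) (r : ℕ → Rk), ρ 0 = q ∧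
        (∀ n, (ρ n, w n, r n, ρ (n + 1)) ∈ M.delta) ∧
        ∃ N, ∀ n, N ≤ n → r n = Rk.two }

/-- `L(M)`: the language of the automaton. -/
def Lang (M : CoBuchi A Q) : Set (ℕ → A) :=
  { w | ∃ q ∈ M.init, w ∈ M.LangFrom q }

/-- `q →₂^w q'`: a finite run from `q` to `q'` on `w` using only rank-2 transitions. -/
def SafeReach (M : CoBuchi A Q) : Q → List A → Q → Prop
  | q, [], q' => q = q'
  | q, a :: w, q' => ∃ p, (q, a, Rk.two, p) ∈ M.delta ∧ SafeReach M p w q'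

/-- A finite run from `q` to `q'` on `w` using transitions of any rank. -/
def Reach (M : CoBuchi A Q) : Q → List A → Q → Prop
  | q, [], q' => q = q'
  | q, a :: w, q' => ∃ r p, (q, a, r, p) ∈ M.delta ∧ Reach M p w q'

/-- Safe language of a state. -/
def Lsf (M : CoBuchi A Q) (q : Q) : Set (List A) := { w | ∃ q', M.SafeReach q w q' }

/-- Semantically-deterministic: every transition respects residuals. -/
def SemDet (M : CoBuchi A Q) : Prop :=
  ∀ p a rk q, (p, a, rk, q) ∈ M.delta →
    M.LangFrom q = { w | consW a w ∈ M.LangFrom p }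

/-- Unsafe-saturated: all residual-respecting rank-1 transitions are present. -/
def UnsafeSat (M : CoBuchi A Q) : Prop :=
  ∀ p a q, M.LangFrom q = { w | consW a w ∈ M.LangFrom p } →
    (p, a, Rk.one, q) ∈ M.delta

/-- Safe-deterministic: at most one rank-2 transition per state and letter. -/
def SafeDet (M : CoBuchi A Q) : Prop :=
  ∀ p a q q', (p, a, Rk.two, q) ∈ M.delta → (p, a, Rk.two, q') ∈ M.delta → q = q'

/-- Normalized: every rank-2 transition can be completed to a rank-2 loop. -/
def Normalized (M : CoBuchi A Q) : Prop :=
  ∀ q a q', (q, a, Rk.two, q') ∈ M.delta → ∃ x, M.SafeReach q' x q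

/-- Deterministic: one initial state, exactly one transition per state and letter. -/
def Deterministic (M : CoBuchi A Q) : Prop :=
  (∃! q, q ∈ M.init) ∧ ∀ p a, ∃! t : Rk × Q, (p, a, t.1, t.2) ∈ M.delta

/-- History-deterministic: a strategy `σ : Σ* → Q` resolving the nondeterminism,
whose run on every `α ∈ L(M)` can be ranked with finitely many rank-1 transitions. -/
def HistoryDet (M : CoBuchi A Q) : Prop :=
  ∃ σ : List A → Q, σ [] ∈ M.init ∧
    (∀ w a, ∃ rk, (σ w, a, rk, σ (w ++ [a])) ∈ M.delta) ∧
    ∀ α ∈ M.Lang, ∃ r : ℕ → Rk,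
      (∀ n, (σ (prefW α n), α n, r n, σ (prefW α (n + 1))) ∈ M.delta) ∧
      ∃ N, ∀ n, N ≤ n → r n = Rk.two

/-- `q` and `q'` are in the same safe SCC (mutually reachable via rank-2 runs). -/
def SameSafeSCC (M : CoBuchi A Q) (q q' : Q) : Prop :=
  (∃ x, M.SafeReach q x q') ∧ (∃ y, M.SafeReach q' y q)

end CoBuchi

section LangDefs

variable {A : Type} [Nonempty A]

/-- The infinite word `u·w`. -/
def appW (u : List A) (w : ℕ → A) : ℕ → A :=
  fun n => if h : n < u.length then u.get ⟨n, h⟩ else w (n - u.length)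

/-- The infinite word `v^ω` (arbitrary if `v = ε`). -/
noncomputable def iterW (v : List A) : ℕ → A :=
  fun n =>
    if h : v = [] then Classical.arbitrary A
    else v.get ⟨n % v.length, Nat.mod_lt _ (by cases v <;> simp_all)⟩

/-- The ultimately periodic word `u v^ω`. -/
noncomputable def upW (u v : List A) : ℕ → A := appW u (iterW v)

/-- The right congruence `u ∼_L v`. -/
def SimL (L : Set (ℕ → A)) (u v : List A) : Prop :=
  ∀ w : ℕ → A, appW u w ∈ L ↔ appW v w ∈ L

/-- `(u,v) ≈_L ⊥`: `v ≠ ε` and `u(vx)^ω ∉ L` for all `x` with `uvx ∼_L u`. -/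
def ApproxBot (L : Set (ℕ → A)) (u v : List A) : Prop :=
  v ≠ [] ∧ ∀ x : List A, SimL L (u ++ v ++ x) u → upW u (v ++ x) ∉ L

/-- The safe language of a pair: `sfl(u,v) = {x | (u,vx) not ≈_L ⊥}`. -/
def Sfl (L : Set (ℕ → A)) (u v : List A) : Set (List A) :=
  { x | ¬ ApproxBot L u (v ++ x) }

/-- `(u,v) ≡_L (u',v')`. -/
def EquivL (L : Set (ℕ → A)) (u v u' v' : List A) : Prop :=
  SimL L (u ++ v) (u' ++ v') ∧ Sfl L u v = Sfl L u' v'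

/-- `(u,v)` is pointed. -/
def IsPointed (L : Set (ℕ → A)) (u v : List A) : Prop :=
  ¬ ApproxBot L u v ∧
    ∀ u₁ u₂ : List A, SimL L (u₁ ++ u₂) u → ¬ ApproxBot L u₁ (u₂ ++ v) →
      Sfl L u v = Sfl L u₁ (u₂ ++ v)

/-- `(u,v) ≈_L (u',v')` (for pairs with nonempty second components). -/
def ApproxL (L : Set (ℕ → A)) (u v u' v' : List A) : Prop :=
  SimL L u u' ∧ SimL L (u ++ v) (u' ++ v') ∧
    ∀ x : List A, SimL L (u ++ v ++ x) u →
      (upW u (v ++ x) ∈ L ↔ upW u' (v' ++ x) ∈ L)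

/-- `L` is recognized by some (total) deterministic co-Büchi automaton. -/
def DCWRecognizable (L : Set (ℕ → A)) : Prop :=
  ∃ (Q : Type) (_ : Fintype Q) (M : CoBuchi A Q), M.Deterministic ∧ M.Lang = L

/-- IsPointed pairs. -/
def PointedPair (L : Set (ℕ → A)) : Type :=
  { p : List A × List A // IsPointed L p.1 p.2 }

/-- `≡_L` as a setoid on all pairs. -/
def equivLSetoid (L : Set (ℕ → A)) : Setoid (List A × List A) where
  r p q := EquivL L p.1 p.2 q.1 q.2
  iseqv := {
    refl := fun p => ⟨fun w => Iff.rfl, rfl⟩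
    symm := fun h => ⟨fun w => (h.1 w).symm, h.2.symm⟩
    trans := fun h g => ⟨fun w => (h.1 w).trans (g.1 w), h.2.trans g.2⟩ }

/-- `≡_L` as a setoid on pointed pairs. -/
def canonSetoid (L : Set (ℕ → A)) : Setoid (PointedPair L) where
  r p q := EquivL L p.1.1 p.1.2 q.1.1 q.1.2
  iseqv := {
    refl := fun p => ⟨fun w => Iff.rfl, rfl⟩
    symm := fun h => ⟨fun w => (h.1 w).symm, h.2.symm⟩
    trans := fun h g => ⟨fun w => (h.1 w).trans (g.1 w), h.2.trans g.2⟩ }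

/-- States of the canonical automaton: `≡_L`-classes of pointed pairs. -/
def CanonState (L : Set (ℕ → A)) : Type := Quotient (canonSetoid L)

/-- The class `⟦u,v⟧` of a pointed pair. -/
def cls (L : Set (ℕ → A)) (u v : List A) (h : IsPointed L u v) : CanonState L :=
  Quotient.mk (canonSetoid L) ⟨(u, v), h⟩

/-- The canonical automaton `A_{≡_L}`. -/
def canonAut (L : Set (ℕ → A)) : CoBuchi A (CanonState L) where
  init := { s | ∃ (u v : List A) (h : IsPointed L u v),
              s = cls L u v h ∧ SimL L (u ++ v) [] }
  delta := { t |
    (∃ (u v : List A) (h : IsPointed L u v) (h' : IsPointed L u (v ++ [t.2.1])),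
        ¬ ApproxBot L u (v ++ [t.2.1]) ∧
        t.1 = cls L u v h ∧ t.2.2.1 = Rk.two ∧
        t.2.2.2 = cls L u (v ++ [t.2.1]) h') ∨
    (∃ (u v u' v' : List A) (h : IsPointed L u v) (h' : IsPointed L u' v'),
        SimL L (u ++ v ++ [t.2.1]) (u' ++ v') ∧
        t.1 = cls L u v h ∧ t.2.2.1 = Rk.one ∧ t.2.2.2 = cls L u' v' h') }

/-- `θ(u,v)`: states of `A_{≡_L}` reachable by reading `u` from an initial state
(any ranks) and then `v` via rank-2 transitions only. -/
def theta (L : Set (ℕ → A)) (u v : List A) : Set (CanonState L) :=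
  { q | ∃ p₀ ∈ (canonAut L).init, ∃ p,
          (canonAut L).Reach p₀ u p ∧ (canonAut L).SafeReach p v q }

/-- `(u,v)` is supported: `θ(u,v) ≠ ∅`. -/
def Supported (L : Set (ℕ → A)) (u v : List A) : Prop := (theta L u v).Nonempty

/-- `(u,v)` is double-supported: two distinct states of `θ(u,v)` in the same safe SCC. -/
def DoubleSupported (L : Set (ℕ → A)) (u v : List A) : Prop :=
  ∃ q ∈ theta L u v, ∃ q' ∈ theta L u v, q ≠ q' ∧ (canonAut L).SameSafeSCC q q'

/-- `(u,v)` is single-supported. -/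
def SingleSupported (L : Set (ℕ → A)) (u v : List A) : Prop :=
  Supported L u v ∧ ¬ DoubleSupported L u v

/-- `w` concatenated with itself `m` times. -/
def repCat (w : List A) : ℕ → List A
  | 0 => []
  | Nat.succ m => w ++ repCat w m

end LangDefs

section MyAux

variable {A Q : Type} [Nonempty A]

lemma myAppW_lt (u : List A) (w : ℕ → A) {n : ℕ} (h : n < u.length) :
    appW u w n = u.get ⟨n, h⟩ := dif_pos h

lemma myAppW_ge (u : List A) (w : ℕ → A) {n : ℕ} (h : u.length ≤ n) :
    appW u w n = w (n - u.length) := dif_neg (by omega)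

lemma myAppW_append (u v : List A) (w : ℕ → A) :
    appW (u ++ v) w = appW u (appW v w) := by
  funext n
  simp only [appW, List.length_append]
  by_cases h1 : n < u.length
  · rw [dif_pos (by omega : n < u.length + v.length), dif_pos h1]
    simp only [List.get_eq_getElem]
    exact List.getElem_append_left h1
  · by_cases h2 : n < u.length + v.length
    · rw [dif_pos h2, dif_neg h1, dif_pos (show n - u.length < v.length by omega)]
      simp only [List.get_eq_getElem]
      exact List.getElem_append_right (by omega)
    · rw [dif_neg h2, dif_neg h1, dif_neg (show ¬ n - u.length < v.length by omega)]
      congr 1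
      omega

lemma myPrefW_appW_add (u : List A) (w : ℕ → A) (m : ℕ) :
    CoBuchi.prefW (appW u w) (u.length + m) = u ++ CoBuchi.prefW w m := by
  apply List.ext_getElem
  · simp [CoBuchi.prefW]
  · intro i h1 h2
    simp only [CoBuchi.prefW, List.getElem_map, List.getElem_range]
    by_cases h : i < u.length
    · rw [myAppW_lt u w h, List.getElem_append_left h]
      simp
    · rw [myAppW_ge u w (le_of_not_gt h), List.getElem_append_right (le_of_not_gt h)]
      simp [CoBuchi.prefW]

lemma myPrefW_appW (u : List A) (w : ℕ → A) :
    CoBuchi.prefW (appW u w) u.length = u := by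
  have := myPrefW_appW_add u w 0
  simpa [CoBuchi.prefW] using this

lemma myIterW_eq {y : List A} (hy : y ≠ []) : iterW y = appW y (iterW y) := by
  funext n
  by_cases h : n < y.length
  · rw [myAppW_lt _ _ h]
    simp [iterW, hy, Nat.mod_eq_of_lt h]
  · rw [myAppW_ge _ _ (le_of_not_gt h)]
    simp only [iterW, dif_neg hy, List.get_eq_getElem]
    have hmod : n % y.length = (n - y.length) % y.length :=
      Nat.mod_eq_sub_mod (le_of_not_gt h)
    congr 1

lemma myPrefW_rep {y : List A} (hy : y ≠ []) :
    ∀ k, CoBuchi.prefW (iterW y) (k * y.length) = repCat y k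
  | 0 => by simp [CoBuchi.prefW, repCat]
  | Nat.succ k => by
      rw [show (k + 1) * y.length = y.length + k * y.length by ring]
      conv_lhs => rw [myIterW_eq hy]
      rw [myPrefW_appW_add, myPrefW_rep hy k]
      rfl

lemma mySimL_append {L : Set (ℕ → A)} {u u' : List A} (h : SimL L u u') (s : List A) :
    SimL L (u ++ s) (u' ++ s) := fun w => by
  rw [myAppW_append, myAppW_append]
  exact h (appW s w)

lemma mySimL_rep {L : Set (ℕ → A)} {u y : List A} (h : SimL L (u ++ y) u) :
    ∀ k, SimL L (u ++ repCat y k) u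
  | 0 => by
      intro w
      rw [show repCat y 0 = ([] : List A) from rfl, List.append_nil]
  | Nat.succ k => by
      intro w
      have h1 := mySimL_append h (repCat y k) w
      rw [show u ++ repCat y (k + 1) = (u ++ y) ++ repCat y k by
        simp [repCat, List.append_assoc]]
      exact h1.trans (mySimL_rep h k w)

lemma myReach_append {M : CoBuchi A Q} (w₁ : List A) {w₂ : List A} {p q : Q} :
    M.Reach p (w₁ ++ w₂) q ↔ ∃ s, M.Reach p w₁ s ∧ M.Reach s w₂ q := by
  induction w₁ generalizing p with
  | nil =>
      simp only [List.nil_append, CoBuchi.Reach]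
      constructor
      · intro h; exact ⟨p, rfl, h⟩
      · rintro ⟨s, rfl, h⟩; exact h
  | cons a w ih =>
      simp only [List.cons_append, CoBuchi.Reach]
      constructor
      · rintro ⟨r, p1, ht, hr⟩
        obtain ⟨s, h1, h2⟩ := ih.mp hr
        exact ⟨s, ⟨r, p1, ht, h1⟩, h2⟩
      · rintro ⟨s, ⟨r, p1, ht, h1⟩, h2⟩
        exact ⟨r, p1, ht, ih.mpr ⟨s, h1, h2⟩⟩

lemma mySafeReach_append {M : CoBuchi A Q} (w₁ : List A) {w₂ : List A} {p q : Q} :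
    M.SafeReach p (w₁ ++ w₂) q ↔ ∃ s, M.SafeReach p w₁ s ∧ M.SafeReach s w₂ q := by
  induction w₁ generalizing p with
  | nil =>
      simp only [List.nil_append, CoBuchi.SafeReach]
      constructor
      · intro h; exact ⟨p, rfl, h⟩
      · rintro ⟨s, rfl, h⟩; exact h
  | cons a w ih =>
      simp only [List.cons_append, CoBuchi.SafeReach]
      constructor
      · rintro ⟨p1, ht, hr⟩
        obtain ⟨s, h1, h2⟩ := ih.mp hr
        exact ⟨s, ⟨p1, ht, h1⟩, h2⟩
      · rintro ⟨s, ⟨p1, ht, h1⟩, h2⟩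
        exact ⟨p1, ht, ih.mpr ⟨s, h1, h2⟩⟩

lemma mySafe_toReach {M : CoBuchi A Q} :
    ∀ {w : List A} {p q : Q}, M.SafeReach p w q → M.Reach p w q := by
  intro w
  induction w with
  | nil => intro p q h; exact h
  | cons a w ih =>
      rintro p q ⟨p1, ht, hr⟩
      exact ⟨Rk.two, p1, ht, ih hr⟩

lemma myReach_exists {M : CoBuchi A Q} (hDet : M.Deterministic) :
    ∀ (w : List A) (p : Q), ∃ q, M.Reach p w q := by
  intro w
  induction w with
  | nil => intro p; exact ⟨p, rfl⟩
  | cons a w ih =>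
      intro p
      obtain ⟨⟨r, p1⟩, ht, _⟩ := hDet.2 p a
      obtain ⟨q, hq⟩ := ih p1
      exact ⟨q, r, p1, ht, hq⟩

lemma myReach_unique {M : CoBuchi A Q} (hDet : M.Deterministic) :
    ∀ {w : List A} {p q q' : Q}, M.Reach p w q → M.Reach p w q' → q = q' := by
  intro w
  induction w with
  | nil => intro p q q' h h'; exact h.symm.trans h'
  | cons a w ih =>
      rintro p q q' ⟨r, p1, ht, h1⟩ ⟨r', p1', ht', h1'⟩
      obtain ⟨t, _, huniq⟩ := hDet.2 p a
      have e1 : ((r, p1) : Rk × Q) = t := huniq _ ht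
      have e2 : ((r', p1') : Rk × Q) = t := huniq _ ht'
      have : p1 = p1' := by
        have := e1.trans e2.symm
        exact congrArg Prod.snd this
      subst this
      exact ih h1 h1'

lemma myNormBack {M : CoBuchi A Q} (hN : M.Normalized) :
    ∀ (w : List A) (p q : Q), M.SafeReach p w q → ∃ z, M.SafeReach q z p := by
  intro w
  induction w with
  | nil =>
      intro p q h
      exact ⟨[], h.symm⟩
  | cons a w ih =>
      rintro p q ⟨p1, ht, hr⟩
      obtain ⟨z1, hz1⟩ := ih p1 q hr
      obtain ⟨x, hx⟩ := hN p a p1 ht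
      exact ⟨z1 ++ x, (mySafeReach_append z1).mpr ⟨p1, hz1, hx⟩⟩

lemma myReach_states {M : CoBuchi A Q} :
    ∀ (w : List A) (p q : Q), M.Reach p w q →
      ∃ (s : ℕ → Q) (rk : ℕ → Rk), s 0 = p ∧ s w.length = q ∧
        ∀ i (h : i < w.length), (s i, w.get ⟨i, h⟩, rk i, s (i + 1)) ∈ M.delta := by
  intro w
  induction w with
  | nil =>
      intro p q h
      exact ⟨fun _ => p, fun _ => Rk.two, rfl, h, fun i hi => absurd hi (by simp)⟩
  | cons a w ih =>
      rintro p q ⟨r, p1, ht, hr⟩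
      obtain ⟨s, rk, hs0, hsl, hst⟩ := ih p1 q hr
      refine ⟨fun n => match n with | 0 => p | Nat.succ k => s k,
              fun n => match n with | 0 => r | Nat.succ k => rk k,
              rfl, hsl, ?_⟩
      intro i hi
      match i with
      | 0 => simpa [hs0] using ht
      | Nat.succ k => exact hst k (by simpa using hi)

lemma mySafe_states {M : CoBuchi A Q} :
    ∀ (w : List A) (p q : Q), M.SafeReach p w q →
      ∃ s : ℕ → Q, s 0 = p ∧ s w.length = q ∧
        ∀ i (h : i < w.length), (s i, w.get ⟨i, h⟩, Rk.two, s (i + 1)) ∈ M.delta := by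
  intro w
  induction w with
  | nil =>
      intro p q h
      exact ⟨fun _ => p, rfl, h, fun i hi => absurd hi (by simp)⟩
  | cons a w ih =>
      rintro p q ⟨p1, ht, hr⟩
      obtain ⟨s, hs0, hsl, hst⟩ := ih p1 q hr
      refine ⟨fun n => match n with | 0 => p | Nat.succ k => s k, rfl, hsl, ?_⟩
      intro i hi
      match i with
      | 0 => simpa [hs0] using ht
      | Nat.succ k => exact hst k (by simpa using hi)

lemma myRun_reach {M : CoBuchi A Q} {α : ℕ → A} {ρ : ℕ → Q} {r : ℕ → Rk} {q₀ : Q}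
    (h0 : ρ 0 = q₀) (hstep : ∀ n, (ρ n, α n, r n, ρ (n + 1)) ∈ M.delta) :
    ∀ m, M.Reach q₀ (CoBuchi.prefW α m) (ρ m)
  | 0 => by
      rw [show CoBuchi.prefW α 0 = ([] : List A) from rfl]
      exact h0.symm
  | Nat.succ m => by
      rw [show CoBuchi.prefW α (m + 1) = CoBuchi.prefW α m ++ [α m] by
        simp [CoBuchi.prefW, List.range_succ]]
      exact (myReach_append _).mpr
        ⟨ρ m, myRun_reach h0 hstep m, ⟨r m, ρ (m + 1), hstep m, rfl⟩⟩

lemma myIter_loop {M : CoBuchi A Q} {p : Q} {y : List A} (hy : y ≠ [])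
    (h : M.SafeReach p y p) : iterW y ∈ M.LangFrom p := by
  obtain ⟨s, hs0, hsl, hstep⟩ := mySafe_states y p p h
  have hl : 0 < y.length := List.length_pos_iff.mpr hy
  refine ⟨fun n => s (n % y.length), fun _ => Rk.two, by simp [hs0], ?_, 0, fun _ _ => rfl⟩
  intro n
  have hi : n % y.length < y.length := Nat.mod_lt _ hl
  have hword : iterW y n = y.get ⟨n % y.length, hi⟩ := by simp [iterW, hy]
  have hkey : s ((n + 1) % y.length) = s (n % y.length + 1) := by
    have hmd := Nat.mod_add_div n y.length
    rcases lt_or_eq_of_le (Nat.succ_le_of_lt hi) with h1 | h1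
    · congr 1
      rw [show n + 1 = (n % y.length + 1) + y.length * (n / y.length) by omega,
          Nat.add_mul_mod_self_left, Nat.mod_eq_of_lt h1]
    · have h1' : n % y.length + 1 = y.length := h1
      have hz : (n + 1) % y.length = 0 := by
        have he : n + 1 = y.length * (n / y.length + 1) := by
          rw [Nat.mul_succ]; omega
        rw [he]; exact Nat.mul_mod_right _ _
      rw [hz, h1', hs0, hsl]
  show (s (n % y.length), iterW y n, Rk.two, s ((n + 1) % y.length)) ∈ M.delta
  rw [hword, hkey]
  exact hstep _ hi

lemma myDet_langFrom {M : CoBuchi A Q} (hDet : M.Deterministic) {p q : Q} {w : List A}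
    (hR : M.Reach p w q) (β : ℕ → A) :
    appW w β ∈ M.LangFrom p ↔ β ∈ M.LangFrom q := by
  constructor
  · rintro ⟨ρ, r, h0, hstep, N, hN⟩
    have hmid : ρ w.length = q := by
      have h1 := myRun_reach h0 hstep w.length
      rw [myPrefW_appW] at h1
      exact myReach_unique hDet h1 hR
    refine ⟨fun n => ρ (n + w.length), fun n => r (n + w.length), by simpa using hmid, ?_, N,
      fun n hn => hN _ (by omega)⟩
    intro n
    have h5 := hstep (n + w.length)
    rw [myAppW_ge w β (by omega : w.length ≤ n + w.length),
         Nat.add_sub_cancel] at h5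
    show (ρ (n + w.length), β n, r (n + w.length), ρ (n + 1 + w.length)) ∈ M.delta
    rw [show n + 1 + w.length = n + w.length + 1 by omega]
    exact h5
  · rintro ⟨ρ, r, h0, hstep, N, hN⟩
    obtain ⟨s, rk, hs0, hsl, hst⟩ := myReach_states w p q hR
    refine ⟨fun n => if n < w.length then s n else ρ (n - w.length),
            fun n => if n < w.length then rk n else r (n - w.length),
            ?_, ?_, N + w.length, ?_⟩
    · by_cases h : 0 < w.length
      · simp [h, hs0]
      · have hw : w.length = 0 := by omega
        have hpq : p = q := by rw [← hs0, ← hsl, hw]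
        simp only [if_neg h, Nat.zero_sub, h0]
        exact hpq.symm
    · intro n
      by_cases h : n < w.length
      · have hword : appW w β n = w.get ⟨n, h⟩ := myAppW_lt w β h
        have ht := hst n h
        by_cases h2 : n + 1 < w.length
        · simpa [h, h2, hword] using ht
        · have he : n + 1 = w.length := by omega
          have hrho : ρ (n + 1 - w.length) = s (n + 1) := by
            rw [he, Nat.sub_self, h0, ← hsl]
          simp only [if_pos h, if_neg (show ¬ n + 1 < w.length by omega), hword, hrho]
          exact ht
      · have hw : w.length ≤ n := le_of_not_gt h
        have hword : appW w β n = β (n - w.length) := myAppW_ge w β hw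
        have := hstep (n - w.length)
        have he : n + 1 - w.length = (n - w.length) + 1 := by omega
        simp only [if_neg h, if_neg (show ¬ n + 1 < w.length by omega), hword, he]
        exact this
    · intro n hn
      simp only [if_neg (show ¬ n < w.length by omega)]
      exact hN _ (by omega)

lemma myMem_lang_iff {M : CoBuchi A Q} (hDet : M.Deterministic) {q₀ : Q}
    (hq₀ : q₀ ∈ M.init) (α : ℕ → A) :
    α ∈ M.Lang ↔ α ∈ M.LangFrom q₀ := by
  constructor
  · rintro ⟨q, hq, h⟩
    obtain ⟨q', _, huniq⟩ := hDet.1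
    rwa [show q = q₀ from (huniq q hq).trans (huniq q₀ hq₀).symm] at h
  · exact fun h => ⟨q₀, hq₀, h⟩

lemma myRun_safe_seg {M : CoBuchi A Q} {α : ℕ → A} {ρ : ℕ → Q} {r : ℕ → Rk}
    (hstep : ∀ n, (ρ n, α n, r n, ρ (n + 1)) ∈ M.delta) :
    ∀ (w : List A) (i : ℕ), (∀ j, j < w.length → r (i + j) = Rk.two) →
      (∀ j (h : j < w.length), α (i + j) = w.get ⟨j, h⟩) →
      M.SafeReach (ρ i) w (ρ (i + w.length)) := by
  intro w
  induction w with
  | nil => intro i _ _; exact rfl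
  | cons a w ih =>
      intro i hr hw
      refine ⟨ρ (i + 1), ?_, ?_⟩
      · have ht := hstep i
        have h1 : α i = a := by simpa using hw 0 (by simp)
        have h2 : r i = Rk.two := by simpa using hr 0 (by simp)
        rwa [h1, h2] at ht
      · have := ih (i + 1) (fun j hj => by
            have := hr (j + 1) (by simpa using Nat.succ_lt_succ hj)
            rwa [show i + (j + 1) = i + 1 + j by omega] at this)
          (fun j hj => by
            have := hw (j + 1) (by simpa using Nat.succ_lt_succ hj)
            rwa [show i + (j + 1) = i + 1 + j by omega] at this)
        rwa [show i + 1 + w.length = i + (w.length + 1) by omega] at this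

end MyAux
/-- `(u,v) ≈_D ⊥` for a deterministic automaton `D`: for every `u' ∼_L u`,
the run of `D` on `u'v` takes a rank-1 transition within the suffix `v`,
i.e. the state `p` reached on `u'` admits no rank-2-only run on `v`. -/
def ApproxD {A Q : Type} [Nonempty A] (D : CoBuchi A Q) (L : Set (ℕ → A))
    (u v : List A) : Prop :=
  ∀ u' : List A, SimL L u' u → ∀ q₀ ∈ D.init, ∀ p, D.Reach q₀ u' p →
    ¬ ∃ q, D.SafeReach p v q

/-- for a normalized deterministic co-Büchi automaton `D`
recognizing `L`: `(u,v) ≈_L ⊥` iff `(u,v) ≈_D ⊥`. -/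
theorem stmt3 {A Q : Type} [Nonempty A] [Fintype A] [Fintype Q]
    (L : Set (ℕ → A)) (D : CoBuchi A Q)
    (hDet : D.Deterministic) (hNorm : D.Normalized) (hL : D.Lang = L)
    (u v : List A) :
    ApproxBot L u v ↔ ApproxD D L u v := by
  constructor
  · rintro ⟨hv, hbot⟩
    intro u' hsim q₀ hq₀ p hReach
    rintro ⟨q, hsafe⟩
    obtain ⟨z, hz⟩ := myNormBack hNorm v p q hsafe
    set y := v ++ z with hy
    have hyp : D.SafeReach p y p := (mySafeReach_append v).mpr ⟨q, hsafe, hz⟩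
    have hyne : y ≠ [] := by simp [hy, hv]
    have hloop : iterW y ∈ D.LangFrom p := myIter_loop hyne hyp
    have hmem : appW u' (iterW y) ∈ L := by
      rw [← hL, myMem_lang_iff hDet hq₀]
      exact (myDet_langFrom hDet hReach _).mpr hloop
    have hmemu : upW u y ∈ L := (hsim (iterW y)).mp hmem
    have hres : SimL L (u' ++ y) u' := by
      intro w
      have e1 := myDet_langFrom hDet hReach (appW y w)
      have e2 := myDet_langFrom hDet (mySafe_toReach hyp) w
      have e3 := myDet_langFrom hDet hReach w
      rw [← hL, myMem_lang_iff hDet hq₀ (appW (u' ++ y) w),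
          myMem_lang_iff hDet hq₀ (appW u' w), myAppW_append]
      exact e1.trans (e2.trans e3.symm)
    have hfinal : SimL L (u ++ y) u := fun w =>
      ((mySimL_append (fun w' => (hsim w').symm) y) w).trans ((hres w).trans (hsim w))
    have hgoal : SimL L (u ++ v ++ z) u := by
      rwa [List.append_assoc]
    exact hbot z hgoal hmemu
  · intro hD
    have hne : v ≠ [] := by
      intro hv
      obtain ⟨q₀, hq₀, _⟩ := hDet.1
      obtain ⟨p, hp⟩ := myReach_exists hDet u q₀
      exact hD u (fun w => Iff.rfl) q₀ hq₀ p hp ⟨p, by rw [hv]; rfl⟩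
    refine ⟨hne, ?_⟩
    intro x hx hmem
    rw [← hL] at hmem
    obtain ⟨q₀, hq₀, ρ, r, h0, hstep, N, hN⟩ := hmem
    set y := v ++ x with hy
    have hyne : y ≠ [] := by simp [hy, hne]
    have hl : 0 < y.length := List.length_pos_iff.mpr hyne
    set n₀ := u.length + N * y.length with hn₀
    have hn₀N : N ≤ n₀ := by
      have : N ≤ N * y.length := Nat.le_mul_of_pos_right N hl
      omega
    have hrun := myRun_reach h0 hstep n₀
    have hpref : CoBuchi.prefW (upW u y) n₀ = u ++ repCat y N := by
      rw [hn₀, show upW u y = appW u (iterW y) from rfl, myPrefW_appW_add,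
          myPrefW_rep hyne N]
    rw [hpref] at hrun
    have hsim' : SimL L (u ++ repCat y N) u := by
      refine mySimL_rep ?_ N
      rwa [← List.append_assoc]
    apply hD (u ++ repCat y N) hsim' q₀ hq₀ (ρ n₀) hrun
    refine ⟨ρ (n₀ + v.length), ?_⟩
    refine myRun_safe_seg hstep v n₀ (fun j hj => hN _ (by omega)) ?_
    intro j hj
    have hjy : j < y.length := by
      rw [hy, List.length_append]; omega
    have h1 : u.length ≤ n₀ + j := by omega
    rw [show upW u y = appW u (iterW y) from rfl, myAppW_ge _ _ h1]
    have h2 : n₀ + j - u.length = j + y.length * N := by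
      rw [hn₀, Nat.mul_comm N y.length]; omega
    rw [h2]
    simp only [iterW, dif_neg hyne, List.get_eq_getElem]
    have h3 : (j + y.length * N) % y.length = j := by
      rw [Nat.add_mul_mod_self_left, Nat.mod_eq_of_lt hjy]
    have h4 : y[(j + y.length * N) % y.length]'(Nat.mod_lt _ hl) = y[j]'hjy := by
      congr 1
    rw [h4]
    exact List.getElem_append_left hj
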